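/- lim_{s→1} ( (1/2^s) · √π · Γ(s−1/2)/Γ(s) · 1/(2^{2s}−1) · ζ(2s−1)/ζ(2s) − 1/(2π(s−1)) ) = (1/π)·( ζ'(−1)/ζ(−1) − log(4π) + 1 − (11/6)·log 2 ). -/

import Mathlib

open Complex Filter

noncomputable section ScatteringAux

private lemma sqrtpi_sq : ((Real.sqrt Real.pi : ℝ) : ℂ) * ((Real.sqrt Real.pi : ℝ) : ℂ) = (Real.pi : ℂ) := by
  rw [← Complex.ofReal_mul, Real.mul_self_sqrt Real.pi_pos.le]

private lemma sqrtpi_ne : ((Real.sqrt Real.pi : ℝ) : ℂ) ≠ 0 := by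
  simp [Real.sqrt_eq_zero', Real.pi_pos, Real.pi_pos.not_ge]

private lemma pi_ne_C : (Real.pi : ℂ) ≠ 0 := Complex.ofReal_ne_zero.2 Real.pi_ne_zero

private lemma cpow_half_pi : (Real.pi : ℂ) ^ (1/2 : ℂ) = ((Real.sqrt Real.pi : ℝ) : ℂ) := by
  rw [show ((1:ℂ)/2) = ((1/2 : ℝ) : ℂ) by norm_num, ← Complex.ofReal_cpow Real.pi_pos.le,
    ← Real.sqrt_eq_rpow]

private lemma cpow_ne' {a : ℂ} (ha : a ≠ 0) (b : ℂ) : a ^ b ≠ 0 := by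
  rw [Complex.cpow_def_of_ne_zero ha]; exact Complex.exp_ne_zero _

private lemma Gammaℝ_two : Complex.Gammaℝ 2 = (Real.pi : ℂ)⁻¹ := by
  rw [Complex.Gammaℝ_def, show (-2/2 : ℂ) = -1 by norm_num, show ((2:ℂ)/2) = 1 by norm_num,
    Complex.Gamma_one, Complex.cpow_neg_one, mul_one]

private lemma Lambda_two : completedRiemannZeta 2 = (Real.pi : ℂ) / 6 := by
  have h := riemannZeta_def_of_ne_zero (two_ne_zero (α := ℂ))
  have hG : Complex.Gammaℝ (2:ℂ) ≠ 0 := by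
    rw [Gammaℝ_two]; simp [Real.pi_ne_zero]
  rw [riemannZeta_two, Gammaℝ_two] at h
  field_simp at h ⊢; exact mul_left_cancel₀ (Complex.ofReal_ne_zero.2 Real.pi_ne_zero) (by linear_combination -(Real.pi:ℂ) * h)

private lemma Gamma_neg_half : Complex.Gamma (-(1/2) : ℂ) = -2 * (Real.sqrt Real.pi : ℂ) := by
  have h := Complex.Gamma_add_one (s := (-(1/2):ℂ)) (by norm_num)
  rw [show (-(1/2) + 1 : ℂ) = 1/2 by ring, Complex.Gamma_one_half_eq, cpow_half_pi] at h
  linear_combination 2 * h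

private lemma neg_half_ne_neg_nat : ∀ m : ℕ, (-(1/2) : ℂ) ≠ -m := by
  intro m hm
  have : (-(1/2) : ℂ).re = (-(m:ℂ)).re := by rw [hm]
  simp only [Complex.neg_re, Complex.natCast_re] at this
  norm_num at this
  rcases Nat.eq_zero_or_pos m with h | h
  · subst h; norm_num at this
  · have h1 : (1:ℝ) ≤ (m:ℝ) := Nat.one_le_cast.2 h
    linarith [this]

private lemma hasDerivAt_Gamma_neg_half :
    HasDerivAt Complex.Gamma
      (2 * (Real.sqrt Real.pi : ℂ) * ((Real.eulerMascheroniConstant : ℂ) + 2 * (Real.log 2 : ℂ))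
        - 4 * (Real.sqrt Real.pi : ℂ)) (-(1/2)) := by
  have hd : DifferentiableAt ℂ Complex.Gamma (-(1/2)) :=
    Complex.differentiableAt_Gamma _ neg_half_ne_neg_nat
  have hg : HasDerivAt Complex.Gamma (deriv Complex.Gamma (-(1/2))) (-(1/2)) := hd.hasDerivAt
  have h1 : HasDerivAt (fun s : ℂ => Complex.Gamma (s + 1))
      (-(Real.sqrt Real.pi : ℂ) * ((Real.eulerMascheroniConstant : ℂ) + 2 * (Real.log 2 : ℂ)))
      (-(1/2)) := by
    have h0 : HasDerivAt Complex.Gamma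
        (-(Real.sqrt Real.pi : ℂ) * ((Real.eulerMascheroniConstant : ℂ) + 2 * (Real.log 2 : ℂ)))
        ((-(1/2) : ℂ) + 1) := by
      rw [show ((-(1/2) : ℂ) + 1) = 1/2 by norm_num,
        show ((Real.log 2 : ℝ) : ℂ) = Complex.log 2 by
          rw [Complex.ofReal_log (by norm_num : (0:ℝ) ≤ 2)]; norm_num]
      exact Complex.hasDerivAt_Gamma_one_half
    exact h0.comp_add_const _ _
  have h2 : HasDerivAt (fun s : ℂ => s * Complex.Gamma s)
      (1 * Complex.Gamma (-(1/2)) + (-(1/2)) * deriv Complex.Gamma (-(1/2))) (-(1/2)) :=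
    (hasDerivAt_id _).mul hg
  have hev : (fun s : ℂ => Complex.Gamma (s + 1)) =ᶠ[nhds (-(1/2) : ℂ)]
      (fun s : ℂ => s * Complex.Gamma s) := by
    filter_upwards [isOpen_ne.mem_nhds (show (-(1/2) : ℂ) ≠ 0 by norm_num)] with s hs
    exact Complex.Gamma_add_one s hs
  have heq := (h2.congr_of_eventuallyEq hev).unique h1
  refine hg.congr_deriv ?_
  rw [Gamma_neg_half] at heq
  linear_combination -2 * heq

private lemma hasDerivAt_Lambda_two :
    HasDerivAt completedRiemannZeta (deriv completedRiemannZeta 2) 2 :=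
  (differentiableAt_completedZeta (by norm_num) (by norm_num)).hasDerivAt

private lemma Lambda_neg_one : completedRiemannZeta (-1) = (Real.pi : ℂ) / 6 := by
  have := completedRiemannZeta_one_sub 2
  rw [show ((1:ℂ) - 2) = -1 by norm_num] at this
  rw [this, Lambda_two]

private lemma hasDerivAt_Lambda_neg_one :
    HasDerivAt completedRiemannZeta (-(deriv completedRiemannZeta 2)) (-1) := by
  have hs : HasDerivAt (fun s : ℂ => 1 - s) (-1) (-1) := by
    simpa using (hasDerivAt_id (-1:ℂ)).const_sub 1
  have h0 : HasDerivAt completedRiemannZeta (deriv completedRiemannZeta 2)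
      ((fun s : ℂ => 1 - s) (-1)) := by
    simpa [show ((1:ℂ) - -1) = 2 by norm_num] using hasDerivAt_Lambda_two
  have h1 := h0.comp (-1 : ℂ) hs
  have h2 : completedRiemannZeta ∘ (HSub.hSub (1:ℂ)) = completedRiemannZeta :=
    funext fun s => completedRiemannZeta_one_sub s
  rw [h2] at h1
  simpa using h1

private lemma Gammaℝ_neg_one : Complex.Gammaℝ (-1) = -2 * (Real.pi : ℂ) := by
  rw [Complex.Gammaℝ_def, show (-(-1:ℂ)/2) = (1/2 : ℂ) by norm_num,
    show ((-1:ℂ)/2) = -(1/2 : ℂ) by norm_num, cpow_half_pi, Gamma_neg_half]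
  linear_combination -2 * sqrtpi_sq

private lemma hasDerivAt_Gammaℝ_neg_one :
    HasDerivAt Complex.Gammaℝ
      ((Real.pi : ℂ) * ((Real.eulerMascheroniConstant : ℂ) + 2 * (Real.log 2 : ℂ)
        + (Real.log Real.pi : ℂ) - 2)) (-1) := by
  have hc : HasDerivAt (fun s : ℂ => (Real.pi : ℂ) ^ (-s/2))
      ((Real.sqrt Real.pi : ℂ) * (Real.log Real.pi : ℂ) * (-(1/2))) (-1) := by
    have hf : HasDerivAt (fun s : ℂ => -s/2) (-(1/2)) (-1) := by
      exact (((hasDerivAt_id (-1:ℂ)).neg).div_const 2).congr_deriv (by norm_num)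
    have := hf.const_cpow (c := (Real.pi : ℂ)) (Or.inl pi_ne_C)
    rw [show (-(-1:ℂ)/2) = (1/2:ℂ) by norm_num, cpow_half_pi,
      show Complex.log (Real.pi : ℂ) = (Real.log Real.pi : ℂ) from
        (Complex.ofReal_log Real.pi_pos.le).symm] at this
    exact this
  have hgam : HasDerivAt (fun s : ℂ => Complex.Gamma (s/2))
      ((2 * (Real.sqrt Real.pi : ℂ) * ((Real.eulerMascheroniConstant : ℂ)
        + 2 * (Real.log 2 : ℂ)) - 4 * (Real.sqrt Real.pi : ℂ)) * (1/2)) (-1) := by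
    have hf : HasDerivAt (fun s : ℂ => s/2) (1/2) (-1) := by
      simpa using (hasDerivAt_id (-1:ℂ)).div_const 2
    have h0 : HasDerivAt Complex.Gamma
        (2 * (Real.sqrt Real.pi : ℂ) * ((Real.eulerMascheroniConstant : ℂ)
          + 2 * (Real.log 2 : ℂ)) - 4 * (Real.sqrt Real.pi : ℂ)) ((fun s : ℂ => s/2) (-1)) := by
      simpa [show ((-1:ℂ)/2) = -(1/2:ℂ) by norm_num] using hasDerivAt_Gamma_neg_half
    exact h0.comp (-1:ℂ) hf
  have hprod := hc.mul hgam
  have : Complex.Gammaℝ = (fun s : ℂ => (Real.pi : ℂ) ^ (-s/2)) * fun s : ℂ => Complex.Gamma (s/2) :=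
    funext fun s => Complex.Gammaℝ_def s
  rw [← this] at hprod
  refine hprod.congr_deriv ?_
  rw [show ((-1:ℂ)/2) = -(1/2:ℂ) by norm_num, show (-(-1:ℂ)/2) = (1/2:ℂ) by norm_num,
    Gamma_neg_half, cpow_half_pi]
  linear_combination ((Real.eulerMascheroniConstant : ℂ) + 2 * (Real.log 2 : ℂ)
        + (Real.log Real.pi : ℂ) - 2) * sqrtpi_sq

private lemma zeta_neg_one : riemannZeta (-1) = -(1/12) := by
  rw [riemannZeta_def_of_ne_zero (by norm_num : (-1:ℂ) ≠ 0), Lambda_neg_one, Gammaℝ_neg_one]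
  field_simp [pi_ne_C]
  ring

private lemma deriv_zeta_neg_one : deriv riemannZeta (-1) =
    (deriv completedRiemannZeta 2) / (2 * (Real.pi : ℂ))
      - ((Real.eulerMascheroniConstant : ℂ) + 2 * (Real.log 2 : ℂ)
        + (Real.log Real.pi : ℂ) - 2) / 24 := by
  have hq := hasDerivAt_Lambda_neg_one.div hasDerivAt_Gammaℝ_neg_one
    (by rw [Gammaℝ_neg_one]; simpa using pi_ne_C)
  have hev : riemannZeta =ᶠ[nhds (-1 : ℂ)] fun s => completedRiemannZeta s / Complex.Gammaℝ s := by
    filter_upwards [isOpen_ne.mem_nhds (show (-1 : ℂ) ≠ 0 by norm_num)] with s hs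
    exact riemannZeta_def_of_ne_zero hs
  rw [(hq.congr_of_eventuallyEq hev).deriv, Lambda_neg_one, Gammaℝ_neg_one]
  field_simp [pi_ne_C]
  ring

/-- The holomorphic prefactor `H(s) = (2^s (2^{2s} - 1) Λ(2s))⁻¹`. -/
private def Hfun (s : ℂ) : ℂ :=
  ((2:ℂ) ^ s * ((2:ℂ) ^ (2*s) - 1) * completedRiemannZeta (2*s))⁻¹

private lemma two_cpow_two : (2:ℂ) ^ ((2:ℂ)) = 4 := by
  rw [show ((2:ℂ)) = ((2:ℕ):ℂ) by norm_num, Complex.cpow_natCast]; norm_num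

private lemma Hfun_one : Hfun 1 = (Real.pi : ℂ)⁻¹ := by
  rw [Hfun, show ((2:ℂ)*1) = 2 by ring, Complex.cpow_one, two_cpow_two, Lambda_two]
  rw [show ((2:ℂ) * (4 - 1) * ((Real.pi:ℂ)/6)) = (Real.pi : ℂ) by ring]

private lemma log_two_C : Complex.log 2 = ((Real.log 2 : ℝ) : ℂ) := by
  rw [Complex.ofReal_log (by norm_num : (0:ℝ) ≤ 2)]; norm_num

private lemma hasDerivAt_Hfun :
    HasDerivAt Hfun
      (-(((11:ℂ)/3) * (Real.log 2 : ℂ) * (Real.pi : ℂ) + 12 * deriv completedRiemannZeta 2)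
        / (Real.pi : ℂ)^2) 1 := by
  have hu : HasDerivAt (fun s : ℂ => (2:ℂ) ^ s) (2 * (Real.log 2 : ℂ)) 1 := by
    have := (hasDerivAt_id (1:ℂ)).const_cpow (c := 2) (Or.inl two_ne_zero)
    refine this.congr_deriv ?_
    simp only [id_eq, Complex.cpow_one, log_two_C]; ring
  have hv : HasDerivAt (fun s : ℂ => (2:ℂ) ^ (2*s) - 1) (8 * (Real.log 2 : ℂ)) 1 := by
    have hf : HasDerivAt (fun s : ℂ => (2:ℂ)*s) 2 1 := by
      simpa using (hasDerivAt_id (1:ℂ)).const_mul (2:ℂ)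
    have := (hf.const_cpow (c := 2) (Or.inl two_ne_zero)).sub_const 1
    refine this.congr_deriv ?_
    rw [show ((2:ℂ)*1) = 2 by ring, two_cpow_two, log_two_C]; ring
  have hw : HasDerivAt (fun s : ℂ => completedRiemannZeta (2*s))
      (2 * deriv completedRiemannZeta 2) 1 := by
    have hf : HasDerivAt (fun s : ℂ => (2:ℂ)*s) 2 1 := by
      simpa using (hasDerivAt_id (1:ℂ)).const_mul (2:ℂ)
    have h0 : HasDerivAt completedRiemannZeta (deriv completedRiemannZeta 2)
        ((fun s : ℂ => (2:ℂ)*s) 1) := by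
      simpa [show ((2:ℂ)*1) = 2 by ring] using hasDerivAt_Lambda_two
    exact (h0.comp (1:ℂ) hf).congr_deriv (mul_comm _ _)
  have hD := (hu.mul hv).mul hw
  have hDne : ((2:ℂ) ^ (1:ℂ) * ((2:ℂ) ^ ((2:ℂ)*1) - 1) * completedRiemannZeta ((2:ℂ)*1)) ≠ 0 := by
    rw [Complex.cpow_one, show ((2:ℂ)*1) = 2 by ring, two_cpow_two, Lambda_two]
    norm_num [Real.pi_ne_zero]
  have hH := hD.inv hDne
  simp only [Pi.mul_apply] at hH
  refine hH.congr_deriv ?_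
  rw [Complex.cpow_one, show ((2:ℂ)*1) = 2 by ring, two_cpow_two, Lambda_two]
  field_simp [pi_ne_C]
  ring

end ScatteringAux

set_option maxHeartbeats 1000000 in
/-- **Diagonal scattering constant of Γ(2).**
`lim_{s→1} ( (1/2^s)·√π·Γ(s−1/2)/Γ(s) · 1/(2^{2s}−1) · ζ(2s−1)/ζ(2s) − 1/(2π(s−1)) )
  = (1/π)·( ζ'(−1)/ζ(−1) − log(4π) + 1 − (11/6)·log 2 )`. -/
theorem gamma_two_scattering_diag :
    Tendsto (fun s : ℂ =>
        (1 / (2 : ℂ) ^ s) * (Real.sqrt Real.pi : ℂ) *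
          (Complex.Gamma (s - 1 / 2) / Complex.Gamma s) *
          (1 / ((2 : ℂ) ^ (2 * s) - 1)) *
          (riemannZeta (2 * s - 1) / riemannZeta (2 * s)) -
        1 / (2 * (Real.pi : ℂ) * (s - 1)))
      (nhdsWithin 1 {(1 : ℂ)}ᶜ)
      (nhds ((1 / (Real.pi : ℂ)) *
        (deriv riemannZeta (-1) / riemannZeta (-1) - (Real.log (4 * Real.pi) : ℂ) + 1 -
          (11 / 6) * (Real.log 2 : ℂ)))) := by
  have key : Tendsto (fun s : ℂ =>
      Hfun s * (completedRiemannZeta₀ (2 - 2*s) - 1/(2*s - 1))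
        + (Hfun s - (Real.pi : ℂ)⁻¹) / (2*(s-1)))
      (nhdsWithin 1 {(1:ℂ)}ᶜ)
      (nhds ((Real.pi:ℂ)⁻¹ * (completedRiemannZeta₀ 0 - 1)
        + (-(((11:ℂ)/3) * (Real.log 2 : ℂ) * (Real.pi : ℂ)
            + 12 * deriv completedRiemannZeta 2) / (Real.pi : ℂ)^2) / 2)) := by
    have T1 : Tendsto (fun s : ℂ => Hfun s * (completedRiemannZeta₀ (2 - 2*s) - 1/(2*s-1)))
        (nhds 1) (nhds ((Real.pi:ℂ)⁻¹ * (completedRiemannZeta₀ 0 - 1))) := by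
      have c1 : ContinuousAt Hfun 1 := hasDerivAt_Hfun.differentiableAt.continuousAt
      have c2 : ContinuousAt (fun s : ℂ => completedRiemannZeta₀ (2 - 2*s)) 1 :=
        (differentiable_completedZeta₀.continuous.comp
          (continuous_const.sub (continuous_const.mul continuous_id))).continuousAt
      have c3 : ContinuousAt (fun s : ℂ => 1/(2*s-1)) 1 := by
        apply ContinuousAt.div continuousAt_const (by fun_prop)
        norm_num
      have h := (c1.mul (c2.sub c3)).tendsto
      simp only [Pi.mul_apply, Pi.sub_apply] at h
      rw [show (Hfun 1 * (completedRiemannZeta₀ (2 - 2*1) - 1/(2*1-1)))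
          = (Real.pi:ℂ)⁻¹ * (completedRiemannZeta₀ 0 - 1) from by
        rw [Hfun_one, show ((2:ℂ) - 2*1) = 0 by ring, show ((2:ℂ)*1 - 1) = 1 by ring]
        norm_num] at h
      exact h
    have T2 : Tendsto (fun s : ℂ => (Hfun s - (Real.pi : ℂ)⁻¹) / (2*(s-1)))
        (nhdsWithin 1 {(1:ℂ)}ᶜ)
        (nhds ((-(((11:ℂ)/3) * (Real.log 2 : ℂ) * (Real.pi : ℂ)
            + 12 * deriv completedRiemannZeta 2) / (Real.pi : ℂ)^2) / 2)) := by
      have hsl := (hasDerivAt_iff_tendsto_slope.mp hasDerivAt_Hfun).div_const (2:ℂ)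
      refine hsl.congr' ?_
      filter_upwards [self_mem_nhdsWithin] with s hs1
      have hne : s - 1 ≠ 0 := sub_ne_zero.mpr hs1
      rw [slope_def_field, Hfun_one, div_div, mul_comm (2:ℂ) (s-1)]
    exact (T1.mono_left nhdsWithin_le_nhds).add T2
  have hlog4pi : ((Real.log (4 * Real.pi) : ℝ) : ℂ)
      = 2 * (Real.log 2 : ℂ) + (Real.log Real.pi : ℂ) := by
    rw [Real.log_mul (by norm_num) Real.pi_ne_zero, show ((4:ℝ)) = 2^2 by norm_num,
      Real.log_pow]
    push_cast
    ring
  have hz0 : completedRiemannZeta₀ 0 = ((Real.eulerMascheroniConstant : ℂ)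
      - (2 * (Real.log 2 : ℂ) + (Real.log Real.pi : ℂ))) / 2 + 1 := by
    have h1 : completedRiemannZeta₀ (0:ℂ) = completedRiemannZeta₀ 1 := by
      have := completedRiemannZeta₀_one_sub 1
      rw [sub_self] at this
      exact this
    have hlog : Complex.log (4 * (Real.pi:ℂ)) = ((Real.log (4 * Real.pi) : ℝ) : ℂ) := by
      rw [show (4 * (Real.pi:ℂ)) = (((4 * Real.pi : ℝ)) : ℂ) by push_cast; ring,
        ← Complex.ofReal_log (by positivity)]
    rw [h1, completedRiemannZeta₀_one, hlog, hlog4pi]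
  have hval : ((Real.pi:ℂ)⁻¹ * (completedRiemannZeta₀ 0 - 1)
        + (-(((11:ℂ)/3) * (Real.log 2 : ℂ) * (Real.pi : ℂ)
            + 12 * deriv completedRiemannZeta 2) / (Real.pi : ℂ)^2) / 2)
      = ((1 / (Real.pi : ℂ)) *
        (deriv riemannZeta (-1) / riemannZeta (-1) - (Real.log (4 * Real.pi) : ℂ) + 1 -
          (11 / 6) * (Real.log 2 : ℂ))) := by
    rw [hz0, zeta_neg_one, deriv_zeta_neg_one, hlog4pi]
    have hinv : (Real.pi:ℂ) * (Real.pi:ℂ)⁻¹ = 1 := mul_inv_cancel₀ pi_ne_C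
    linear_combination (-(11:ℂ)/6 * (Real.log 2 : ℂ) * (Real.pi:ℂ)⁻¹) * hinv
  rw [← hval]
  refine key.congr' ?_
  -- the eventual identity
  have hΛ : ∀ᶠ s : ℂ in nhds 1, completedRiemannZeta (2*s) ≠ 0 := by
    have h2 : ContinuousAt (fun s : ℂ => (2:ℂ)*s) 1 := by fun_prop
    have hΛc : ContinuousAt completedRiemannZeta ((fun s : ℂ => (2:ℂ)*s) 1) := by
      simp only [mul_one]
      exact (differentiableAt_completedZeta (by norm_num) (by norm_num)).continuousAt
    refine (hΛc.comp h2).eventually_ne ?_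
    show completedRiemannZeta ((2:ℂ)*1) ≠ 0
    rw [mul_one, Lambda_two]
    exact div_ne_zero pi_ne_C (by norm_num)
  have hpow : ∀ᶠ s : ℂ in nhds 1, (2:ℂ)^(2*s) - 1 ≠ 0 := by
    have hc : ContinuousAt (fun s : ℂ => (2:ℂ)^(2*s) - 1) 1 :=
      (((((hasDerivAt_id (1:ℂ)).const_mul (2:ℂ)).const_cpow
        (Or.inl two_ne_zero)).sub_const 1)).differentiableAt.continuousAt
    refine hc.eventually_ne ?_
    show (2:ℂ)^((2:ℂ)*1) - 1 ≠ 0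
    rw [mul_one, two_cpow_two]
    norm_num
  have hball : ∀ᶠ s : ℂ in nhds 1, s ∈ Metric.ball (1:ℂ) (1/4) :=
    Metric.ball_mem_nhds _ (by norm_num)
  filter_upwards [self_mem_nhdsWithin, nhdsWithin_le_nhds hΛ, nhdsWithin_le_nhds hpow,
    nhdsWithin_le_nhds hball] with s hsne hs2 hs3 hs1
  have hsne' : s ≠ 1 := hsne
  have habs : ‖s - 1‖ < 1/4 := by
    simpa [Complex.dist_eq] using Metric.mem_ball.mp hs1
  have hre : 3/4 < s.re := by
    have h1 := (Complex.abs_re_le_norm (s-1)).trans_lt habs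
    rw [Complex.sub_re, Complex.one_re] at h1
    have h2 := (abs_lt.mp h1).1
    linarith
  have hre2 : (s - 1/2).re = s.re - 1/2 := by
    simp [Complex.sub_re]
  have hγs : Complex.Gamma s ≠ 0 := Complex.Gamma_ne_zero_of_re_pos (by linarith)
  have hγs2 : Complex.Gamma (s - 1/2) ≠ 0 := by
    refine Complex.Gamma_ne_zero_of_re_pos ?_
    rw [hre2]; linarith
  have hs0 : s ≠ 0 := by
    intro h; rw [h] at hre; simp at hre; linarith
  have h2s : (2:ℂ)*s ≠ 0 := mul_ne_zero two_ne_zero hs0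
  have h2s1 : (2:ℂ)*s - 1 ≠ 0 := by
    intro h
    have hhalf : s = 1/2 := by linear_combination h/2
    rw [hhalf] at hre
    norm_num at hre
  have hsub1 : s - 1 ≠ 0 := sub_ne_zero.mpr hsne'
  have h22s : (2:ℂ) - 2*s ≠ 0 := by
    intro h
    exact hsne' (by linear_combination -h/2)
  have hπs : (Real.pi:ℂ)^(-s) ≠ 0 := cpow_ne' pi_ne_C _
  have h2cp : (2:ℂ)^s ≠ 0 := cpow_ne' two_ne_zero _
  have e1 : Complex.Gammaℝ (2*s) = (Real.pi:ℂ)^(-s) * Complex.Gamma s := by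
    rw [Complex.Gammaℝ_def, show (-(2*s)/2 : ℂ) = -s by ring, show ((2*s)/2 : ℂ) = s by ring]
  have e2 : Complex.Gammaℝ (2*s - 1)
      = ((Real.sqrt Real.pi : ℝ):ℂ) * ((Real.pi:ℂ)^(-s) * Complex.Gamma (s - 1/2)) := by
    rw [Complex.Gammaℝ_def, show (-(2*s-1)/2 : ℂ) = 1/2 + -s by ring,
      show ((2*s-1)/2 : ℂ) = s - 1/2 by ring, Complex.cpow_add _ _ pi_ne_C, cpow_half_pi]
    ring
  have e4 : completedRiemannZeta (2*s - 1)
      = completedRiemannZeta₀ (2 - 2*s) - 1/(2 - 2*s) - 1/(2*s - 1) := by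
    have h5 := completedRiemannZeta_one_sub (2*s - 1)
    rw [show (1 - (2*s - 1)) = 2 - 2*s by ring] at h5
    rw [← h5, completedRiemannZeta_eq, show (1 - (2 - 2*s)) = 2*s - 1 by ring]
  have hstep : (1 / (2 : ℂ) ^ s) * (Real.sqrt Real.pi : ℂ) *
          (Complex.Gamma (s - 1 / 2) / Complex.Gamma s) *
          (1 / ((2 : ℂ) ^ (2 * s) - 1)) *
          (riemannZeta (2 * s - 1) / riemannZeta (2 * s))
      = Hfun s * completedRiemannZeta (2*s - 1) := by
    rw [riemannZeta_def_of_ne_zero h2s1, riemannZeta_def_of_ne_zero h2s, e1, e2, Hfun]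
    obtain ⟨b, hb⟩ : ∃ b, (2:ℂ)^(2*s) - 1 = b := ⟨_, rfl⟩
    rw [hb] at hs3 ⊢
    have hγs2' : Complex.Gamma (-1/2 + s) ≠ 0 := by
      have := hγs2; rwa [show (s - 1/2 : ℂ) = -1/2 + s by ring] at this
    have hs2' : completedRiemannZeta (s*2) ≠ 0 := by
      have := hs2; rwa [mul_comm] at this
    field_simp [h2cp, hs3, hs2, hγs, hγs2, hπs, sqrtpi_ne]
    rw [show ((s*2 - 1)/2 : ℂ) = -1/2 + s by ring]
    exact mul_div_cancel_left₀ _ hγs2'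
  rw [hstep, e4]
  field_simp [pi_ne_C]
  ring
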